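/- There exists ε₀ > 0 such that for all ε with |ε| ≤ ε₀ and all θ ∈ ℝ, one has |(1 + e^{iθ})/2 + iε(e^{iθ} - 1)²| ≤ 1, with equality if and only if θ ≡ 0 modulo 2π. -/

import Mathlib

noncomputable def gEps (ε θ : ℝ) : ℂ :=
  (1 + Complex.exp (θ * Complex.I)) / 2 + Complex.I * ε * (Complex.exp (θ * Complex.I) - 1) ^ 2

lemma gEps_sq_abs (ε θ : ℝ) :
    ‖gEps ε θ‖ ^ 2 =
      1 - (1 - Real.cos θ) / 2 + 2 * ε * Real.sin θ * (1 - Real.cos θ)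
        + 4 * ε ^ 2 * (1 - Real.cos θ) ^ 2 := by
  rw [Complex.sq_norm]
  simp only [gEps, Complex.exp_mul_I, ← Complex.ofReal_cos, ← Complex.ofReal_sin,
    Complex.normSq_apply, Complex.add_re, Complex.add_im, Complex.div_re, Complex.div_im,
    Complex.mul_re, Complex.mul_im, Complex.one_re, Complex.one_im, Complex.I_re, Complex.I_im,
    Complex.ofReal_re, Complex.ofReal_im, Complex.sub_re, Complex.sub_im,
    Complex.normSq_ofNat, Complex.re_ofNat, Complex.im_ofNat, pow_two]
  have h := Real.sin_sq_add_cos_sq θ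
  linear_combination (1/4 - ε * Real.sin θ
    + ε^2 * (Real.sin θ^2 + Real.cos θ^2 + 3 - 4 * Real.cos θ)) * h

theorem exists_eps0_selfmap :
    ∃ ε₀ > (0:ℝ), ∀ ε : ℝ, |ε| ≤ ε₀ → ∀ θ : ℝ,
      ‖gEps ε θ‖ ≤ 1 ∧
      (‖gEps ε θ‖ = 1 ↔ ∃ k : ℤ, θ = 2 * Real.pi * k) := by
  refine ⟨1/10, by norm_num, ?_⟩
  intro ε hε θ
  have hε1 : ε ≤ 1/10 := le_trans (le_abs_self ε) hε
  have hε2 : -(1/10) ≤ ε := neg_le_of_abs_le hε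
  have hc1 : Real.cos θ ≤ 1 := Real.cos_le_one θ
  have hc2 : -1 ≤ Real.cos θ := Real.neg_one_le_cos θ
  have hs1 : Real.sin θ ≤ 1 := Real.sin_le_one θ
  have hs2 : -1 ≤ Real.sin θ := Real.neg_one_le_sin θ
  have hkey := gEps_sq_abs ε θ
  have habs0 : (0:ℝ) ≤ ‖gEps ε θ‖ := norm_nonneg _
  have hcos_iff : Real.cos θ = 1 ↔ ∃ k : ℤ, θ = 2 * Real.pi * k := by
    rw [Real.cos_eq_one_iff]
    constructor
    · rintro ⟨n, hn⟩; exact ⟨n, by linarith⟩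
    · rintro ⟨n, hn⟩; exact ⟨n, by linarith⟩
  have ht0 : (0:ℝ) ≤ 1 - Real.cos θ := by linarith
  have ht2 : 1 - Real.cos θ ≤ 2 := by linarith
  have hA := mul_nonneg ht0 (mul_nonneg (by linarith : (0:ℝ) ≤ 1/10 - ε)
    (by linarith : (0:ℝ) ≤ 1 + Real.sin θ))
  have hB := mul_nonneg ht0 (mul_nonneg (by linarith : (0:ℝ) ≤ 1/10 + ε)
    (by linarith : (0:ℝ) ≤ 1 - Real.sin θ))
  have hC := mul_nonneg (mul_nonneg ht0 ht0)
    (mul_nonneg (by linarith : (0:ℝ) ≤ 1/10 - ε) (by linarith : (0:ℝ) ≤ 1/10 + ε))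
  have hD := mul_nonneg ht0 (by linarith : (0:ℝ) ≤ 2 - (1 - Real.cos θ))
  have e1 : 2 * ε * Real.sin θ * (1 - Real.cos θ) ≤ (1 - Real.cos θ) / 5 := by
    nlinarith [hA, hB]
  have e2 : 4 * ε ^ 2 * (1 - Real.cos θ) ^ 2 ≤ 8 * (1 - Real.cos θ) / 100 := by
    nlinarith [hC, hD]
  have hsq : ‖gEps ε θ‖ ^ 2 ≤ 1 := by rw [hkey]; linarith
  constructor
  · nlinarith [hsq, habs0]
  · constructor
    · intro h1
      rw [← hcos_iff]
      by_contra hne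
      have ht : 0 < 1 - Real.cos θ := lt_of_le_of_ne (by linarith) (fun h => hne (by linarith))
      have : ‖gEps ε θ‖ ^ 2 < 1 := by rw [hkey]; linarith
      rw [h1] at this; norm_num at this
    · intro ⟨k, hk⟩
      have hcos : Real.cos θ = 1 := hcos_iff.2 ⟨k, hk⟩
      have h2 : ‖gEps ε θ‖ ^ 2 = 1 ^ 2 := by rw [hkey, hcos]; ring
      exact (pow_left_inj₀ habs0 zero_le_one (by norm_num)).mp h2
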